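/- If u_1, ..., u_{n+2} are vectors in E^{n+1} that are pairwise obtuse (u_i · u_j < 0 for i ≠ j) and u_{n+3} = -e_1, with u_i · u_{n+3} < 0 for all i ≤ n+2, then the projections of u_1, ..., u_{n+2} onto the orthogonal complement of e_1 are pairwise obtuse vectors in E^n. -/

import Mathlib

open scoped RealInnerProductSpace

theorem projection_preserves_obtuse (n : ℕ)
    (u : Fin (n + 2) → EuclideanSpace ℝ (Fin (n + 1)))
    (hobtuse : ∀ i j, i ≠ j → ⟪u i, u j⟫ < 0)
    (hfirst : ∀ i, 0 < u i 0) :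
    ∀ i j, i ≠ j →
      ⟪(show EuclideanSpace ℝ (Fin n) from WithLp.toLp 2 (fun m : Fin n => u i m.succ)),
       (show EuclideanSpace ℝ (Fin n) from WithLp.toLp 2 (fun m : Fin n => u j m.succ))⟫ < 0 := by
  intro i j hij
  have h1 := hobtuse i j hij
  have h2 := mul_pos (hfirst i) (hfirst j)
  simp only [PiLp.inner_apply, PiLp.toLp_apply, RCLike.inner_apply, conj_trivial] at h1 ⊢
  rw [Fin.sum_univ_succ] at h1
  nlinarith
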